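/- Fix a bipartition A ∪ B = Λ of a finite lattice with metric d, and an exponent α > 0. Suppose a density matrix ρ on ⊗_{i∈Λ} ℂ^{d₀} satisfies the clustering bound |Cor_ρ(O_X, O_Y)| ≤ C d(X,Y)^{−α} ‖O_X‖‖O_Y‖ for all operators O_X, O_Y supported on disjoint X ⊆ A, Y ⊆ B. If H_∂ = ∑_{i∈A, j∈B} h_{i,j} with each h_{i,j} = ∑_{s=1}^{d₀⁴} h_i^{(s)} ⊗ h_j^{(s)} a two-site interaction satisfying max_s ‖h_i^{(s)}‖·‖h_j^{(s)}‖ ≤ g/d(i,j)^α, then tr[(ρ^A ⊗ ρ^B − ρ) H_∂] ≤ C g d₀⁴ ∑_{i∈A, j∈B} d(i,j)^{−2α}. -/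

import Mathlib

open scoped Matrix.Norms.L2Operator ComplexOrder Kronecker

section Setup

variable {A B : Type*} [Fintype A] [Fintype B] [DecidableEq A] [DecidableEq B]
  {d₀ : ℕ}

/-- The configuration at site `i ∈ A ⊕ B` of a basis label of `⊗_{i} ℂ^{d₀}`. -/
def coordAt (p : (A → Fin d₀) × (B → Fin d₀)) : A ⊕ B → Fin d₀ :=
  Sum.elim p.1 p.2

/-- An operator on `⊗_{i∈Λ} ℂ^{d₀}` (with `Λ = A ⊕ B`) is supported on
`X ⊆ Λ` if its matrix elements depend only on the configurations inside `X`
and vanish unless the configurations agree outside `X`. -/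
def SupportedOn (X : Finset (A ⊕ B))
    (O : Matrix ((A → Fin d₀) × (B → Fin d₀)) ((A → Fin d₀) × (B → Fin d₀)) ℂ) :
    Prop :=
  (∀ p q p' q', (∀ i ∈ X, coordAt p i = coordAt p' i) →
      (∀ i ∈ X, coordAt q i = coordAt q' i) →
      (∀ i ∉ X, coordAt p i = coordAt q i) →
      (∀ i ∉ X, coordAt p' i = coordAt q' i) → O p q = O p' q') ∧
  (∀ p q, (∃ i ∉ X, coordAt p i ≠ coordAt q i) → O p q = 0)

/-- Distance between two subsets of the lattice. -/
noncomputable def setDist [MetricSpace (A ⊕ B)] (X Y : Finset (A ⊕ B)) : ℝ :=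
  sInf (Set.image2 dist (X : Set (A ⊕ B)) (Y : Set (A ⊕ B)))

/-- Correlation function `Cor_ρ(O,O') = tr(ρOO') − tr(ρO)·tr(ρO')`. -/
noncomputable def Cor {m : Type*} [Fintype m]
    (ρ O O' : Matrix m m ℂ) : ℂ :=
  (ρ * O * O').trace - (ρ * O).trace * (ρ * O').trace

/-- Marginal on the `A` factor. -/
noncomputable def margA
    (ρ : Matrix ((A → Fin d₀) × (B → Fin d₀)) ((A → Fin d₀) × (B → Fin d₀)) ℂ) :
    Matrix (A → Fin d₀) (A → Fin d₀) ℂ :=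
  Matrix.of fun a a' => ∑ b : B → Fin d₀, ρ (a, b) (a', b)

/-- Marginal on the `B` factor. -/
noncomputable def margB
    (ρ : Matrix ((A → Fin d₀) × (B → Fin d₀)) ((A → Fin d₀) × (B → Fin d₀)) ℂ) :
    Matrix (B → Fin d₀) (B → Fin d₀) ℂ :=
  Matrix.of fun b b' => ∑ a : A → Fin d₀, ρ (a, b) (a, b')

end Setup


section AuxLemmas
variable {A B : Type*} [Fintype A] [Fintype B] [DecidableEq A] [DecidableEq B] {d₀ : ℕ}

set_option linter.unusedSectionVars false

lemma suppA (i : A)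
    (O : Matrix ((A → Fin d₀) × (B → Fin d₀)) ((A → Fin d₀) × (B → Fin d₀)) ℂ)
    (hO : SupportedOn {Sum.inl i} O)
    (a a' : A → Fin d₀) (b b' b₀ : B → Fin d₀) :
    O (a, b) (a', b') = if b = b' then O (a, b₀) (a', b₀) else 0 := by
  by_cases hb : b = b'
  · subst hb
    rw [if_pos rfl]
    by_cases ha : ∀ k, k ≠ i → a k = a' k
    · apply hO.1
      · intro s hs; simp only [Finset.mem_singleton] at hs; subst hs; rfl
      · intro s hs; simp only [Finset.mem_singleton] at hs; subst hs; rfl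
      · intro s hs
        cases s with
        | inl k => exact ha k (by simpa using hs)
        | inr j => rfl
      · intro s hs
        cases s with
        | inl k => exact ha k (by simpa using hs)
        | inr j => rfl
    · push_neg at ha
      obtain ⟨k, hk, hak⟩ := ha
      rw [hO.2 (a, b) (a', b) ⟨Sum.inl k, by simpa using hk, hak⟩,
        hO.2 (a, b₀) (a', b₀) ⟨Sum.inl k, by simpa using hk, hak⟩]
  · rw [if_neg hb]
    have : ∃ j, b j ≠ b' j := by
      by_contra h; push_neg at h; exact hb (funext h)
    obtain ⟨j, hj⟩ := this
    exact hO.2 _ _ ⟨Sum.inr j, by simp, hj⟩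

lemma suppB (j : B)
    (O : Matrix ((A → Fin d₀) × (B → Fin d₀)) ((A → Fin d₀) × (B → Fin d₀)) ℂ)
    (hO : SupportedOn {Sum.inr j} O)
    (a a' a₀ : A → Fin d₀) (b b' : B → Fin d₀) :
    O (a, b) (a', b') = if a = a' then O (a₀, b) (a₀, b') else 0 := by
  by_cases ha : a = a'
  · subst ha
    rw [if_pos rfl]
    by_cases hb : ∀ k, k ≠ j → b k = b' k
    · apply hO.1
      · intro s hs; simp only [Finset.mem_singleton] at hs; subst hs; rfl
      · intro s hs; simp only [Finset.mem_singleton] at hs; subst hs; rfl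
      · intro s hs
        cases s with
        | inl k => rfl
        | inr k => exact hb k (by simpa using hs)
      · intro s hs
        cases s with
        | inl k => rfl
        | inr k => exact hb k (by simpa using hs)
    · push_neg at hb
      obtain ⟨k, hk, hbk⟩ := hb
      rw [hO.2 (a, b) (a, b') ⟨Sum.inr k, by simpa using hk, hbk⟩,
        hO.2 (a₀, b) (a₀, b') ⟨Sum.inr k, by simpa using hk, hbk⟩]
  · rw [if_neg ha]
    have : ∃ k, a k ≠ a' k := by
      by_contra h; push_neg at h; exact ha (funext h)
    obtain ⟨k, hk⟩ := this
    exact hO.2 _ _ ⟨Sum.inl k, by simp, hk⟩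

lemma traceA (ρ : Matrix ((A → Fin d₀) × (B → Fin d₀)) ((A → Fin d₀) × (B → Fin d₀)) ℂ)
    (uA : Matrix (A → Fin d₀) (A → Fin d₀) ℂ) :
    (ρ * (uA ⊗ₖ (1 : Matrix (B → Fin d₀) (B → Fin d₀) ℂ))).trace
      = (margA ρ * uA).trace := by
  simp only [Matrix.trace, Matrix.diag, Matrix.mul_apply, margA, Matrix.of_apply,
    Matrix.kroneckerMap_apply, Matrix.one_apply, mul_ite, mul_one, mul_zero,
    Finset.sum_mul]
  rw [Fintype.sum_prod_type]
  simp only [Fintype.sum_prod_type, Finset.sum_ite_eq', Finset.mem_univ, if_true]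
  exact Finset.sum_congr rfl fun x _ => Finset.sum_comm

lemma traceB (ρ : Matrix ((A → Fin d₀) × (B → Fin d₀)) ((A → Fin d₀) × (B → Fin d₀)) ℂ)
    (vB : Matrix (B → Fin d₀) (B → Fin d₀) ℂ) :
    (ρ * ((1 : Matrix (A → Fin d₀) (A → Fin d₀) ℂ) ⊗ₖ vB)).trace
      = (margB ρ * vB).trace := by
  simp only [Matrix.trace, Matrix.diag, Matrix.mul_apply, margB, Matrix.of_apply,
    Matrix.kroneckerMap_apply, Matrix.one_apply, ite_mul, one_mul, zero_mul,
    mul_ite, mul_one, mul_zero, Finset.sum_mul]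
  rw [Fintype.sum_prod_type]
  simp only [Fintype.sum_prod_type]
  have key : ∀ (x : A → Fin d₀) (x1 : B → Fin d₀),
      (∑ x2 : A → Fin d₀, ∑ x3 : B → Fin d₀,
        if x2 = x then ρ (x, x1) (x2, x3) * vB x3 x1 else 0)
      = ∑ x3 : B → Fin d₀, ρ (x, x1) (x, x3) * vB x3 x1 := by
    intro x x1
    rw [Finset.sum_comm]
    simp [Finset.sum_ite_eq', Finset.mem_univ, if_true]
  simp only [key]
  rw [Finset.sum_comm]
  exact Finset.sum_congr rfl fun b _ => Finset.sum_comm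

end AuxLemmas

/-- Central intermediate inequality of Theorem 1: power-law clustering plus
power-law decaying two-site boundary interactions
`h_{i,j} = ∑_{s} h_i^{(s)} ⊗ h_j^{(s)}` with
`max_s ‖h_i^{(s)}‖·‖h_j^{(s)}‖ ≤ g/d(i,j)^α` imply
`tr[(ρ^A ⊗ ρ^B − ρ) H_∂] ≤ C g d₀⁴ ∑_{i∈A,j∈B} d(i,j)^{-2α}`. -/
theorem stmt_15 {A B : Type*} [Fintype A] [Fintype B] [DecidableEq A] [DecidableEq B]
    [MetricSpace (A ⊕ B)] (d₀ : ℕ) (hd₀ : 1 ≤ d₀)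
    (α C g : ℝ) (hα : 0 < α) (hC : 0 < C) (hg : 0 < g)
    (ρ : Matrix ((A → Fin d₀) × (B → Fin d₀)) ((A → Fin d₀) × (B → Fin d₀)) ℂ)
    (hρ : ρ.PosSemidef ∧ ρ.trace = 1)
    (hclust : ∀ (X : Finset A) (Y : Finset B)
      (OX OY : Matrix ((A → Fin d₀) × (B → Fin d₀)) ((A → Fin d₀) × (B → Fin d₀)) ℂ),
      SupportedOn (X.image Sum.inl) OX → SupportedOn (Y.image Sum.inr) OY →
      ‖Cor ρ OX OY‖ ≤ C * setDist (X.image Sum.inl) (Y.image Sum.inr) ^ (-α)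
        * ‖OX‖ * ‖OY‖)
    (uop vop : A → B → Fin (d₀ ^ 4) →
      Matrix ((A → Fin d₀) × (B → Fin d₀)) ((A → Fin d₀) × (B → Fin d₀)) ℂ)
    (hu : ∀ i j s, SupportedOn {Sum.inl i} (uop i j s))
    (hv : ∀ i j s, SupportedOn {Sum.inr j} (vop i j s))
    (hnorm : ∀ (i : A) (j : B) (s : Fin (d₀ ^ 4)),
      ‖uop i j s‖ * ‖vop i j s‖ ≤ g / dist (Sum.inl i : A ⊕ B) (Sum.inr j) ^ α)
    (Hbd : Matrix ((A → Fin d₀) × (B → Fin d₀)) ((A → Fin d₀) × (B → Fin d₀)) ℂ)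
    (hHbd : Hbd = ∑ i : A, ∑ j : B, ∑ s : Fin (d₀ ^ 4), uop i j s * vop i j s) :
    (((margA ρ ⊗ₖ margB ρ - ρ) * Hbd).trace).re
      ≤ C * g * (d₀ ^ 4 : ℕ) * ∑ i : A, ∑ j : B,
          dist (Sum.inl i : A ⊕ B) (Sum.inr j) ^ (-(2 * α)) := by
  classical
  have hd0' : 0 < d₀ := hd₀
  set b₀ : B → Fin d₀ := fun _ => ⟨0, hd0'⟩ with hb₀
  set a₀ : A → Fin d₀ := fun _ => ⟨0, hd0'⟩ with ha₀
  -- per-term bound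
  have term : ∀ (i : A) (j : B) (s : Fin (d₀ ^ 4)),
      (((margA ρ ⊗ₖ margB ρ - ρ) * (uop i j s * vop i j s)).trace).re
        ≤ C * g * dist (Sum.inl i : A ⊕ B) (Sum.inr j) ^ (-(2 * α)) := by
    intro i j s
    set u := uop i j s with hu_def
    set v := vop i j s with hv_def
    set d := dist (Sum.inl i : A ⊕ B) (Sum.inr j) with hd_def
    have hdpos : 0 < d := dist_pos.mpr (by simp)
    set uA : Matrix (A → Fin d₀) (A → Fin d₀) ℂ :=
      Matrix.of fun a a' => u (a, b₀) (a', b₀) with huA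
    set vB : Matrix (B → Fin d₀) (B → Fin d₀) ℂ :=
      Matrix.of fun b b' => v (a₀, b) (a₀, b') with hvB
    have hufac : u = uA ⊗ₖ (1 : Matrix (B → Fin d₀) (B → Fin d₀) ℂ) := by
      ext ⟨a, b⟩ ⟨a', b'⟩
      rw [show u (a, b) (a', b') = if b = b' then u (a, b₀) (a', b₀) else 0 from
        suppA i u (hu i j s) a a' b b' b₀]
      simp [Matrix.kroneckerMap_apply, Matrix.one_apply, uA]
    have hvfac : v = (1 : Matrix (A → Fin d₀) (A → Fin d₀) ℂ) ⊗ₖ vB := by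
      ext ⟨a, b⟩ ⟨a', b'⟩
      rw [show v (a, b) (a', b') = if a = a' then v (a₀, b) (a₀, b') else 0 from
        suppB j v (hv i j s) a a' a₀ b b']
      simp [Matrix.kroneckerMap_apply, Matrix.one_apply, vB]
    have huv : u * v = uA ⊗ₖ vB := by
      rw [hufac, hvfac, ← Matrix.mul_kronecker_mul, Matrix.mul_one, Matrix.one_mul]
    have tmix : ((margA ρ ⊗ₖ margB ρ) * (u * v)).trace
        = (ρ * u).trace * (ρ * v).trace := by
      rw [huv, ← Matrix.mul_kronecker_mul, Matrix.trace_kronecker, hufac, hvfac,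
        traceA, traceB]
    have main : (((margA ρ ⊗ₖ margB ρ - ρ) * (u * v)).trace) = - Cor ρ u v := by
      rw [Matrix.sub_mul, Matrix.trace_sub, tmix, Cor, ← mul_assoc]
      ring
    have hre : (((margA ρ ⊗ₖ margB ρ - ρ) * (u * v)).trace).re ≤ ‖Cor ρ u v‖ := by
      rw [main]
      calc (- Cor ρ u v).re ≤ ‖- Cor ρ u v‖ := Complex.re_le_norm _
        _ = ‖Cor ρ u v‖ := norm_neg _
    have hcl := hclust {i} {j} u v
      (by simpa [Finset.image_singleton] using hu i j s)
      (by simpa [Finset.image_singleton] using hv i j s)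
    have hsd : setDist (({i} : Finset A).image Sum.inl)
        (({j} : Finset B).image Sum.inr) = d := by
      rw [hd_def]
      simp [setDist, Finset.image_singleton]
    rw [hsd] at hcl
    have hn := hnorm i j s
    have hdnn : (0:ℝ) ≤ d ^ (-α) := Real.rpow_nonneg hdpos.le _
    calc (((margA ρ ⊗ₖ margB ρ - ρ) * (u * v)).trace).re
        ≤ C * d ^ (-α) * ‖u‖ * ‖v‖ := le_trans hre hcl
      _ = (C * d ^ (-α)) * (‖u‖ * ‖v‖) := by ring
      _ ≤ (C * d ^ (-α)) * (g / d ^ α) := by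
          exact mul_le_mul_of_nonneg_left hn (by positivity)
      _ = C * g * (d ^ (-α) * (d ^ α)⁻¹) := by ring
      _ = C * g * (d ^ (-α) * d ^ (-α)) := by rw [← Real.rpow_neg hdpos.le]
      _ = C * g * d ^ (-(2 * α)) := by
          rw [← Real.rpow_add hdpos]
          ring_nf
  -- expand the trace of the sum
  have expand : (((margA ρ ⊗ₖ margB ρ - ρ) * Hbd).trace).re
      = ∑ i : A, ∑ j : B, ∑ s : Fin (d₀ ^ 4),
          (((margA ρ ⊗ₖ margB ρ - ρ) * (uop i j s * vop i j s)).trace).re := by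
    rw [hHbd]
    simp only [Finset.mul_sum, Matrix.trace_sum, Complex.re_sum]
  rw [expand]
  have step : ∀ i : A, ∀ j : B,
      (∑ s : Fin (d₀ ^ 4),
        (((margA ρ ⊗ₖ margB ρ - ρ) * (uop i j s * vop i j s)).trace).re)
      ≤ (d₀ ^ 4 : ℕ) * (C * g * dist (Sum.inl i : A ⊕ B) (Sum.inr j) ^ (-(2 * α))) := by
    intro i j
    calc (∑ s : Fin (d₀ ^ 4),
          (((margA ρ ⊗ₖ margB ρ - ρ) * (uop i j s * vop i j s)).trace).re)
        ≤ ∑ _s : Fin (d₀ ^ 4),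
            C * g * dist (Sum.inl i : A ⊕ B) (Sum.inr j) ^ (-(2 * α)) :=
          Finset.sum_le_sum fun s _ => term i j s
      _ = (d₀ ^ 4 : ℕ) * (C * g * dist (Sum.inl i : A ⊕ B) (Sum.inr j) ^ (-(2 * α))) := by
          simp [Finset.sum_const, Finset.card_univ, nsmul_eq_mul]
  calc (∑ i : A, ∑ j : B, ∑ s : Fin (d₀ ^ 4),
        (((margA ρ ⊗ₖ margB ρ - ρ) * (uop i j s * vop i j s)).trace).re)
      ≤ ∑ i : A, ∑ j : B,
          (d₀ ^ 4 : ℕ) * (C * g * dist (Sum.inl i : A ⊕ B) (Sum.inr j) ^ (-(2 * α))) :=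
        Finset.sum_le_sum fun i _ => Finset.sum_le_sum fun j _ => step i j
    _ = C * g * (d₀ ^ 4 : ℕ) * ∑ i : A, ∑ j : B,
          dist (Sum.inl i : A ⊕ B) (Sum.inr j) ^ (-(2 * α)) := by
        rw [Finset.mul_sum]
        refine Finset.sum_congr rfl fun i _ => ?_
        rw [Finset.mul_sum]
        refine Finset.sum_congr rfl fun j _ => ?_
        ring
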